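/- arXiv:1104.0696 — 5 statements merged into one kernel-verified Lean document; each statement's English description precedes it below -/
import Mathlib

section
/- In any associative unital ℂ-algebra A whose elements b_i^ξ, f_α^η satisfy the defining relations of the relative parabose set P_BF, the parafermionic bilinears close under the commutator: for all α,β,γ,δ' ∈ J and all ξ,η,ε,φ ∈ {1,−1}, [[f_α^ξ, f_β^η], [f_γ^ε, f_{δ'}^φ]] = ½(φ−η)² δ_{β δ'} [f_γ^ε, f_α^ξ] + ½(φ−ξ)² δ_{α δ'} [f_β^η, f_γ^ε] + ½(ε−η)² δ_{βγ} [f_α^ξ, f_{δ'}^φ] + ½(ε−ξ)² δ_{αγ} [f_{δ'}^φ, f_β^η]. -/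
/-- The commutator `[x, y] = x*y - y*x`. -/
def pbComm {A : Type*} [Ring A] (x y : A) : A := x * y - y * x

/-- The anticommutator `{x, y} = x*y + y*x`. -/
def pbAComm {A : Type*} [Ring A] (x y : A) : A := x * y + y * x

/-- Kronecker delta with values in `ℂ`. -/
def kd {I : Type*} [DecidableEq I] (i j : I) : ℂ := if i = j then 1 else 0

/-- A sign, i.e. `+1` or `-1`, regarded as an integer. -/
def IsSign (x : ℤ) : Prop := x = 1 ∨ x = -1

/-- The defining trilinear relations of the relative parabose set `P_BF`,
for a family `b` of parabosonic and `f` of parafermionic generators. -/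
structure PBFRelations {A : Type*} [Ring A] [Algebra ℂ A]
    {I J : Type*} [DecidableEq I] [DecidableEq J]
    (b : I → ℤ → A) (f : J → ℤ → A) : Prop where
  rel_bbb : ∀ (i j k : I) (ξ η ε : ℤ), IsSign ξ → IsSign η → IsSign ε →
    pbComm (pbAComm (b i ξ) (b j η)) (b k ε)
      = (((ε - η : ℤ) : ℂ) * kd j k) • b i ξ + (((ε - ξ : ℤ) : ℂ) * kd i k) • b j η
  rel_fff : ∀ (α β γ : J) (ξ η ε : ℤ), IsSign ξ → IsSign η → IsSign ε →
    pbComm (pbComm (f α ξ) (f β η)) (f γ ε)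
      = ((((ε - η) ^ 2 : ℤ) : ℂ) / 2 * kd β γ) • f α ξ
        - ((((ε - ξ) ^ 2 : ℤ) : ℂ) / 2 * kd α γ) • f β η
  rel_bbf : ∀ (i j : I) (α : J) (ξ η ε : ℤ), IsSign ξ → IsSign η → IsSign ε →
    pbComm (pbAComm (b i ξ) (b j η)) (f α ε) = 0
  rel_ffb : ∀ (α β : J) (i : I) (ξ η ε : ℤ), IsSign ξ → IsSign η → IsSign ε →
    pbComm (pbComm (f α ξ) (f β η)) (b i ε) = 0
  rel_fbb : ∀ (α : J) (i j : I) (ξ η ε : ℤ), IsSign ξ → IsSign η → IsSign ε →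
    pbComm (pbAComm (f α ξ) (b i η)) (b j ε) = (((ε - η : ℤ) : ℂ) * kd i j) • f α ξ
  rel_bff : ∀ (i : I) (α β : J) (ξ η ε : ℤ), IsSign ξ → IsSign η → IsSign ε →
    pbAComm (pbAComm (b i ξ) (f α η)) (f β ε) = ((((ε - η) ^ 2 : ℤ) : ℂ) / 2 * kd α β) • b i ξ



private lemma pbComm_jacobi {A : Type*} [Ring A] (x c d : A) :
    pbComm x (pbComm c d) = pbComm (pbComm x c) d - pbComm (pbComm x d) c := by
  simp only [pbComm]; noncomm_ring

private lemma pbComm_smul_sub_left {A : Type*} [Ring A] [Algebra ℂ A]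
    (r s : ℂ) (x y z : A) :
    pbComm (r • x - s • y) z = r • pbComm x z - s • pbComm y z := by
  simp only [pbComm, sub_mul, mul_sub, smul_mul_assoc, mul_smul_comm, smul_sub]
  abel

/-- The parafermionic bilinears close under the commutator. -/
theorem parafermi_bilinears_close {A : Type*} [Ring A] [Algebra ℂ A]
    {I J : Type*} [DecidableEq I] [DecidableEq J]
    (b : I → ℤ → A) (f : J → ℤ → A) (h : PBFRelations b f) :
    ∀ (α β γ δ' : J) (ξ η ε φ : ℤ), IsSign ξ → IsSign η → IsSign ε → IsSign φ →
      pbComm (pbComm (f α ξ) (f β η)) (pbComm (f γ ε) (f δ' φ))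
        = ((((φ - η) ^ 2 : ℤ) : ℂ) / 2 * kd β δ') • pbComm (f γ ε) (f α ξ)
          + ((((φ - ξ) ^ 2 : ℤ) : ℂ) / 2 * kd α δ') • pbComm (f β η) (f γ ε)
          + ((((ε - η) ^ 2 : ℤ) : ℂ) / 2 * kd β γ) • pbComm (f α ξ) (f δ' φ)
          + ((((ε - ξ) ^ 2 : ℤ) : ℂ) / 2 * kd α γ) • pbComm (f δ' φ) (f β η) := by
  intro α β γ δ' ξ η ε φ hξ hη hε hφ
  have hγ := h.rel_fff α β γ ξ η ε hξ hη hε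
  have hδ := h.rel_fff α β δ' ξ η φ hξ hη hφ
  rw [pbComm_jacobi, hγ, hδ, pbComm_smul_sub_left, pbComm_smul_sub_left]
  have hab : ∀ u v : A, pbComm u v = -pbComm v u := by
    intro u v; simp only [pbComm, neg_sub]
  rw [hab (f α ξ) (f γ ε), hab (f β η) (f δ' φ)]
  simp only [smul_neg]
  abel
end

section
/- In any associative unital ℂ-algebra A whose elements b_i^ξ, f_α^η satisfy the defining relations of the relative parabose set P_BF, the mixed bilinears satisfy the Lie-superalgebra multiplication rules: for all i,j,l ∈ I, α,β,γ ∈ J and all ξ,η,ε,φ ∈ {1,−1}: (i) [{b_i^ξ, b_j^η}, [f_α^ε, f_β^φ]] = 0; (ii) [{b_i^ξ, b_j^η}, {f_α^ε, b_l^φ}] = (φ−η)δ_{jl}{f_α^ε, b_i^ξ} + (φ−ξ)δ_{il}{f_α^ε, b_j^η}; (iii) [[f_α^ξ, f_β^η], {f_γ^ε, b_l^φ}] = ½(ε−η)²δ_{βγ}{f_α^ξ, b_l^φ} − ½(ε−ξ)²δ_{αγ}{f_β^η, b_l^φ}; (iv) {{f_α^ξ, b_l^η}, {f_β^ε, b_j^φ}}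 = (φ−η)δ_{jl}[f_α^ξ, f_β^ε] + ½(ε−ξ)²δ_{αβ}{b_l^η, b_j^φ}. -/
section Aux
variable {A : Type*} [Ring A] [Algebra ℂ A]

lemma pbAComm_symm (x y : A) : pbAComm x y = pbAComm y x := by
  unfold pbAComm; abel

lemma kd_symm {I : Type*} [DecidableEq I] (i j : I) : kd i j = kd j i := by
  simp [kd, eq_comm]

lemma comm_comm_expand (x y z : A) :
    pbComm x (pbComm y z) = pbComm (pbComm x y) z + pbComm y (pbComm x z) := by
  unfold pbComm; noncomm_ring

lemma comm_acomm_expand (x y z : A) :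
    pbComm x (pbAComm y z) = pbAComm (pbComm x y) z + pbAComm y (pbComm x z) := by
  unfold pbComm pbAComm; noncomm_ring

lemma acomm_acomm_expand (x y z : A) :
    pbAComm x (pbAComm y z) = pbAComm (pbAComm x y) z + pbComm (pbComm x z) y := by
  unfold pbComm pbAComm; noncomm_ring

end Aux

/-- The mixed bilinears satisfy the Lie-superalgebra multiplication rules. -/
theorem mixed_bilinears_rules {A : Type*} [Ring A] [Algebra ℂ A]
    {I J : Type*} [DecidableEq I] [DecidableEq J]
    (b : I → ℤ → A) (f : J → ℤ → A) (h : PBFRelations b f) :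
    ∀ (i j l : I) (α β γ : J) (ξ η ε φ : ℤ), IsSign ξ → IsSign η → IsSign ε → IsSign φ →
      (pbComm (pbAComm (b i ξ) (b j η)) (pbComm (f α ε) (f β φ)) = 0) ∧
      (pbComm (pbAComm (b i ξ) (b j η)) (pbAComm (f α ε) (b l φ))
        = (((φ - η : ℤ) : ℂ) * kd j l) • pbAComm (f α ε) (b i ξ)
          + (((φ - ξ : ℤ) : ℂ) * kd i l) • pbAComm (f α ε) (b j η)) ∧
      (pbComm (pbComm (f α ξ) (f β η)) (pbAComm (f γ ε) (b l φ))
        = ((((ε - η) ^ 2 : ℤ) : ℂ) / 2 * kd β γ) • pbAComm (f α ξ) (b l φ)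
          - ((((ε - ξ) ^ 2 : ℤ) : ℂ) / 2 * kd α γ) • pbAComm (f β η) (b l φ)) ∧
      (pbAComm (pbAComm (f α ξ) (b l η)) (pbAComm (f β ε) (b j φ))
        = (((φ - η : ℤ) : ℂ) * kd j l) • pbComm (f α ξ) (f β ε)
          + ((((ε - ξ) ^ 2 : ℤ) : ℂ) / 2 * kd α β) • pbAComm (b l η) (b j φ)) := by
  intro i j l α β γ ξ η ε φ hξ hη hε hφ
  refine ⟨?_, ?_, ?_, ?_⟩
  · rw [comm_comm_expand, h.rel_bbf i j α ξ η ε hξ hη hε,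
      h.rel_bbf i j β ξ η φ hξ hη hφ]
    simp [pbComm]
  · rw [comm_acomm_expand, h.rel_bbf i j α ξ η ε hξ hη hε,
      h.rel_bbb i j l ξ η φ hξ hη hφ]
    simp only [pbAComm, zero_mul, mul_zero, add_zero, zero_add, mul_add, add_mul,
      mul_smul_comm, smul_mul_assoc, smul_add]
    abel
  · rw [comm_acomm_expand, h.rel_fff α β γ ξ η ε hξ hη hε,
      h.rel_ffb α β l ξ η φ hξ hη hφ]
    simp only [pbAComm, zero_mul, mul_zero, add_zero, zero_add, mul_add, add_mul,
      sub_mul, mul_sub, mul_smul_comm, smul_mul_assoc, smul_add, smul_sub]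
    abel
  · rw [acomm_acomm_expand, h.rel_fbb α l j ξ η φ hξ hη hφ,
      pbAComm_symm (f α ξ) (b l η), h.rel_bff l α β η ξ ε hη hξ hε,
      kd_symm l j]
    simp only [pbComm, pbAComm, mul_smul_comm, smul_mul_assoc, smul_add, smul_sub]
    abel
end

section
/- The paraparticle realization map preserves commutators of even elements: for all complex matrices A, A' ∈ M_{m×m}(ℂ) and D, D' ∈ M_{n×n}(ℂ), one has [J₀(A,D), J₀(A',D')] = J₀(AA' − A'A, DD' − D'D) in the algebra 𝒜. -/
open scoped BigOperators

/-- The even part of the paraparticle realization map: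
`J₀(A,D) = ½ Σ A_{kl} {b_k^+, b_l^-} + ½ Σ D_{αβ} [f_α^+, f_β^-]`. -/
noncomputable def J0 {𝒜 : Type*} [Ring 𝒜] [Algebra ℂ 𝒜] {m n : ℕ}
    (b : Fin m → ℤ → 𝒜) (f : Fin n → ℤ → 𝒜)
    (A : Matrix (Fin m) (Fin m) ℂ) (D : Matrix (Fin n) (Fin n) ℂ) : 𝒜 :=
  (1 / 2 : ℂ) • (∑ k, ∑ l, A k l • pbAComm (b k 1) (b l (-1)))
    + (1 / 2 : ℂ) • (∑ α, ∑ β, D α β • pbComm (f α 1) (f β (-1)))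

/-- The odd part of the paraparticle realization map:
`J₁(B,C) = ½ Σ ( B_{kα} {b_k^+, f_α^-} + C_{αk} {f_α^+, b_k^-} )`. -/
noncomputable def J1 {𝒜 : Type*} [Ring 𝒜] [Algebra ℂ 𝒜] {m n : ℕ}
    (b : Fin m → ℤ → 𝒜) (f : Fin n → ℤ → 𝒜)
    (B : Matrix (Fin m) (Fin n) ℂ) (C : Matrix (Fin n) (Fin m) ℂ) : 𝒜 :=
  (1 / 2 : ℂ) • (∑ k, ∑ α, (B k α • pbAComm (b k 1) (f α (-1)) + C α k • pbAComm (f α 1) (b k (-1))))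

section Helpers
set_option linter.unusedSectionVars false
variable {𝒜 : Type*} [Ring 𝒜] [Algebra ℂ 𝒜]

lemma pbComm_add_add (a b c d : 𝒜) :
    pbComm (a + b) (c + d) = pbComm a c + pbComm a d + pbComm b c + pbComm b d := by
  simp only [pbComm]; noncomm_ring

lemma pbComm_smul_left (c : ℂ) (x y : 𝒜) : pbComm (c • x) y = c • pbComm x y := by
  simp [pbComm, smul_sub, smul_mul_assoc, mul_smul_comm]

lemma pbComm_smul_right (c : ℂ) (x y : 𝒜) : pbComm x (c • y) = c • pbComm x y := by
  simp [pbComm, smul_sub, smul_mul_assoc, mul_smul_comm]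

lemma pbComm_sum_left {ι : Type*} (s : Finset ι) (x : ι → 𝒜) (y : 𝒜) :
    pbComm (∑ i ∈ s, x i) y = ∑ i ∈ s, pbComm (x i) y := by
  simp [pbComm, Finset.sum_mul, Finset.mul_sum, Finset.sum_sub_distrib]

lemma pbComm_sum_right {ι : Type*} (s : Finset ι) (x : 𝒜) (y : ι → 𝒜) :
    pbComm x (∑ i ∈ s, y i) = ∑ i ∈ s, pbComm x (y i) := by
  simp [pbComm, Finset.sum_mul, Finset.mul_sum, Finset.sum_sub_distrib]

lemma pbComm_comm_right (x y z : 𝒜) :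
    pbComm x (pbComm y z) = pbComm (pbComm x y) z + pbComm y (pbComm x z) := by
  simp only [pbComm]; noncomm_ring

lemma pbComm_acomm_right (x y z : 𝒜) :
    pbComm x (pbAComm y z) = pbAComm (pbComm x y) z + pbAComm y (pbComm x z) := by
  simp only [pbComm, pbAComm]; noncomm_ring

lemma pbAComm_smul_left (c : ℂ) (x y : 𝒜) : pbAComm (c • x) y = c • pbAComm x y := by
  simp [pbAComm, smul_add, smul_mul_assoc, mul_smul_comm]

lemma pbAComm_smul_right (c : ℂ) (x y : 𝒜) : pbAComm x (c • y) = c • pbAComm x y := by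
  simp [pbAComm, smul_add, smul_mul_assoc, mul_smul_comm]

lemma pbAComm_zero_left (y : 𝒜) : pbAComm 0 y = 0 := by simp [pbAComm]
lemma pbAComm_zero_right (y : 𝒜) : pbAComm y 0 = 0 := by simp [pbAComm]
lemma pbComm_zero_left (y : 𝒜) : pbComm 0 y = 0 := by simp [pbComm]
lemma pbComm_zero_right (y : 𝒜) : pbComm y 0 = 0 := by simp [pbComm]

lemma kd_sum_collapse {m : ℕ} {M : Type*} [AddCommMonoid M] [Module ℂ M]
    (g : Fin m → M) (l : Fin m) : ∑ k', kd l k' • g k' = g l := by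
  simp [kd, ite_smul, Finset.sum_ite_eq]

end Helpers

section Quad
variable {M : Type*} [AddCommMonoid M] [Module ℂ M] {m : ℕ}

lemma pbComm_expand2 {𝒜 : Type*} [Ring 𝒜] [Algebra ℂ 𝒜] {ι κ : Type*}
    (s : Finset ι) (t : Finset κ) (x : ι → 𝒜) (y : κ → 𝒜) :
    pbComm (∑ i ∈ s, x i) (∑ j ∈ t, y j) = ∑ i ∈ s, ∑ j ∈ t, pbComm (x i) (y j) := by
  rw [pbComm_sum_left]
  exact Finset.sum_congr rfl fun i _ => pbComm_sum_right _ _ _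

lemma quad_sum₁ (Bb : Fin m → Fin m → M) (A A' : Matrix (Fin m) (Fin m) ℂ) :
    ∑ k, ∑ k', ∑ l, ∑ l', (A' k' l' * (A k l * (2 * kd l k'))) • Bb k l'
      = (2 : ℂ) • ∑ k, ∑ l, ((A * A') k l) • Bb k l := by
  rw [Finset.smul_sum]
  refine Finset.sum_congr rfl fun k _ => ?_
  rw [Finset.sum_comm]
  have step : ∀ l : Fin m, (∑ k', ∑ l', (A' k' l' * (A k l * (2 * kd l k'))) • Bb k l')
      = ∑ l', (2 * (A k l * A' l l')) • Bb k l' := by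
    intro l
    have : ∀ k' l', (A' k' l' * (A k l * (2 * kd l k'))) • Bb k l'
        = kd l k' • ((2 * (A k l * A' k' l')) • Bb k l') := by
      intro k' l'; rw [smul_smul]; congr 1; ring
    simp only [this, ← Finset.smul_sum]
    rw [kd_sum_collapse (fun k' => ∑ l', (2 * (A k l * A' k' l')) • Bb k l') l]
  simp only [step]
  rw [Finset.sum_comm, Finset.smul_sum]
  refine Finset.sum_congr rfl fun l' _ => ?_
  rw [← Finset.sum_smul, smul_smul]
  congr 1
  rw [Matrix.mul_apply, Finset.mul_sum]

lemma quad_sum₂ (Bb : Fin m → Fin m → M) (A A' : Matrix (Fin m) (Fin m) ℂ) :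
    ∑ k, ∑ k', ∑ l, ∑ l', (A' k' l' * (A k l * (2 * kd k l'))) • Bb k' l
      = (2 : ℂ) • ∑ k, ∑ l, ((A' * A) k l) • Bb k l := by
  have step : ∀ k k' l : Fin m, (∑ l', (A' k' l' * (A k l * (2 * kd k l'))) • Bb k' l)
      = (2 * (A k l * A' k' k)) • Bb k' l := by
    intro k k' l
    have : ∀ l', (A' k' l' * (A k l * (2 * kd k l'))) • Bb k' l
        = kd k l' • ((2 * (A k l * A' k' l')) • Bb k' l) := by
      intro l'; rw [smul_smul]; congr 1; ring
    simp only [this]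
    exact kd_sum_collapse (fun l' => (2 * (A k l * A' k' l')) • Bb k' l) k
  simp only [step]
  -- LHS = ∑ k, ∑ k', ∑ l, (2 * (A k l * A' k' k)) • Bb k' l
  rw [Finset.smul_sum, Finset.sum_comm]
  -- now ∑ k', ∑ k, ∑ l
  refine Finset.sum_congr rfl fun k' _ => ?_
  rw [Finset.sum_comm, Finset.smul_sum]
  -- now ∑ l, ∑ k
  refine Finset.sum_congr rfl fun l _ => ?_
  rw [← Finset.sum_smul, smul_smul]
  congr 1
  rw [Matrix.mul_apply, Finset.mul_sum]
  exact Finset.sum_congr rfl fun j _ => by ring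

end Quad

/-- The paraparticle realization map preserves commutators of even elements. -/
theorem J0_comm_J0 {𝒜 : Type*} [Ring 𝒜] [Algebra ℂ 𝒜] {m n : ℕ}
    (hm : 0 < m) (hn : 0 < n)
    (b : Fin m → ℤ → 𝒜) (f : Fin n → ℤ → 𝒜) (h : PBFRelations b f)
    (A A' : Matrix (Fin m) (Fin m) ℂ) (D D' : Matrix (Fin n) (Fin n) ℂ) :
    pbComm (J0 b f A D) (J0 b f A' D') = J0 b f (A * A' - A' * A) (D * D' - D' * D) := by
  have s1 : IsSign 1 := Or.inl rfl
  have s2 : IsSign (-1) := Or.inr rfl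
  -- basic commutators with a single generator
  have hBp : ∀ k l k' : Fin m, pbComm (pbAComm (b k 1) (b l (-1))) (b k' 1)
      = (2 * kd l k') • b k 1 := by
    intro k l k'
    have := h.rel_bbb k l k' 1 (-1) 1 s1 s2 s1
    norm_num at this
    simpa using this
  have hBm : ∀ k l l' : Fin m, pbComm (pbAComm (b k 1) (b l (-1))) (b l' (-1))
      = (-(2 * kd k l')) • b l (-1) := by
    intro k l l'
    have := h.rel_bbb k l l' 1 (-1) (-1) s1 s2 s2
    norm_num at this
    simpa [neg_smul] using this
  have hFp : ∀ α β α' : Fin n, pbComm (pbComm (f α 1) (f β (-1))) (f α' 1)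
      = (2 * kd β α') • f α 1 := by
    intro α β α'
    have := h.rel_fff α β α' 1 (-1) 1 s1 s2 s1
    norm_num at this
    simpa using this
  have hFm : ∀ α β β' : Fin n, pbComm (pbComm (f α 1) (f β (-1))) (f β' (-1))
      = (-(2 * kd α β')) • f β (-1) := by
    intro α β β'
    have := h.rel_fff α β β' 1 (-1) (-1) s1 s2 s2
    norm_num at this
    simpa [neg_smul] using this
  -- commutators of the quadratic elements
  have hBB : ∀ k l k' l' : Fin m,
      pbComm (pbAComm (b k 1) (b l (-1))) (pbAComm (b k' 1) (b l' (-1)))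
        = (2 * kd l k') • pbAComm (b k 1) (b l' (-1))
          - (2 * kd k l') • pbAComm (b k' 1) (b l (-1)) := by
    intro k l k' l'
    rw [pbComm_acomm_right, hBp k l k', hBm k l l', pbAComm_smul_left,
      pbAComm_smul_right, neg_smul, ← sub_eq_add_neg]
  have hFF : ∀ α β α' β' : Fin n,
      pbComm (pbComm (f α 1) (f β (-1))) (pbComm (f α' 1) (f β' (-1)))
        = (2 * kd β α') • pbComm (f α 1) (f β' (-1))
          - (2 * kd α β') • pbComm (f α' 1) (f β (-1)) := by
    intro α β α' β'
    rw [pbComm_comm_right, hFp α β α', hFm α β β', pbComm_smul_left,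
      pbComm_smul_right, neg_smul, ← sub_eq_add_neg]
  have hBF : ∀ (k l : Fin m) (α β : Fin n),
      pbComm (pbAComm (b k 1) (b l (-1))) (pbComm (f α 1) (f β (-1))) = 0 := by
    intro k l α β
    rw [pbComm_comm_right, h.rel_bbf k l α 1 (-1) 1 s1 s2 s1,
      h.rel_bbf k l β 1 (-1) (-1) s1 s2 s2, pbComm_zero_left, pbComm_zero_right, add_zero]
  have hFB : ∀ (α β : Fin n) (k l : Fin m),
      pbComm (pbComm (f α 1) (f β (-1))) (pbAComm (b k 1) (b l (-1))) = 0 := by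
    intro α β k l
    rw [pbComm_acomm_right, h.rel_ffb α β k 1 (-1) 1 s1 s2 s1,
      h.rel_ffb α β l 1 (-1) (-1) s1 s2 s2, pbAComm_zero_left, pbAComm_zero_right, add_zero]
  simp only [J0]
  rw [pbComm_add_add]
  simp only [pbComm_smul_left, pbComm_smul_right, smul_smul, pbComm_expand2,
    hBB, hFF, hBF, hFB, smul_zero, Finset.sum_const_zero, add_zero, zero_add,
    smul_sub, Finset.sum_sub_distrib]
  simp only [quad_sum₁ (fun k l => pbAComm (b k 1) (b l (-1))) A A',
    quad_sum₂ (fun k l => pbAComm (b k 1) (b l (-1))) A A',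
    quad_sum₁ (fun α β => pbComm (f α 1) (f β (-1))) D D',
    quad_sum₂ (fun α β => pbComm (f α 1) (f β (-1))) D D']
  simp only [Matrix.sub_apply, sub_smul, Finset.sum_sub_distrib]
  module
end

section
/- Let A be a (not necessarily commutative) unital ring and let Q⁻, f⁺, b⁺, R⁺ ∈ A satisfy Q⁻f⁺ + f⁺Q⁻ = b⁺, b⁺f⁺ + f⁺b⁺ = 2R⁺, and R⁺f⁺ + f⁺R⁺ = 0. Then for every natural number m ≥ 2, Q⁻(f⁺)^m = (−1)^m (f⁺)^m Q⁻ + m(−1)^{m−1} (f⁺)^{m−1} b⁺ + m(m−1)(−1)^m (f⁺)^{m−2} R⁺. -/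
theorem aux_key {A : Type*} [Ring A] (Qm fp bp Rp : A)
    (h1 : Qm * fp + fp * Qm = bp) (h2 : bp * fp + fp * bp = 2 * Rp)
    (h3 : Rp * fp + fp * Rp = 0) :
    ∀ n : ℕ, Qm * fp ^ (n + 2)
      = (-1 : A) ^ n * fp ^ (n + 2) * Qm
        + ((n : A) + 2) * (-1 : A) ^ (n + 1) * fp ^ (n + 1) * bp
        + ((n : A) + 2) * ((n : A) + 1) * (-1 : A) ^ n * fp ^ n * Rp := by
  have hQ : Qm * fp = bp - fp * Qm := by rw [← h1]; noncomm_ring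
  have hb : bp * fp = 2 * Rp - fp * bp := by rw [← h2]; noncomm_ring
  have hR : Rp * fp = -(fp * Rp) := by
    have := h3; linear_combination (norm := noncomm_ring) h3
  intro n
  induction n with
  | zero =>
      have e : Qm * fp ^ (0 + 2) = Qm * fp * fp := by noncomm_ring
      rw [e, hQ, sub_mul, hb, mul_assoc fp Qm fp, hQ]
      push_cast
      noncomm_ring
  | succ n ih =>
      have step : Qm * fp ^ (n + 1 + 2) = Qm * fp ^ (n + 2) * fp := by
        rw [mul_assoc, ← pow_succ]
      rw [step, ih]
      simp only [add_mul, mul_assoc]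
      rw [hQ, hb, hR]
      push_cast
      simp only [pow_succ]
      noncomm_ring

/-- If `Q⁻f⁺ + f⁺Q⁻ = b⁺`, `b⁺f⁺ + f⁺b⁺ = 2R⁺` and `R⁺f⁺ + f⁺R⁺ = 0` in a unital ring,
then for every `m ≥ 2`,
`Q⁻(f⁺)^m = (−1)^m (f⁺)^m Q⁻ + m(−1)^{m−1} (f⁺)^{m−1} b⁺ + m(m−1)(−1)^m (f⁺)^{m−2} R⁺`. -/
theorem Qminus_fplus_pow_closed {A : Type*} [Ring A] (Qm fp bp Rp : A)
    (h1 : Qm * fp + fp * Qm = bp) (h2 : bp * fp + fp * bp = 2 * Rp)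
    (h3 : Rp * fp + fp * Rp = 0)
    (m : ℕ) (hm : 2 ≤ m) :
    Qm * fp ^ m
      = (-1 : A) ^ m * fp ^ m * Qm
        + (m : A) * (-1 : A) ^ (m - 1) * fp ^ (m - 1) * bp
        + (m : A) * ((m : A) - 1) * (-1 : A) ^ m * fp ^ (m - 2) * Rp := by
  obtain ⟨n, rfl⟩ : ∃ n, m = n + 2 := ⟨m - 2, by omega⟩
  have key := aux_key Qm fp bp Rp h1 h2 h3 n
  simp only [show n + 2 - 1 = n + 1 from rfl, show n + 2 - 2 = n from rfl]
  rw [key]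
  push_cast
  simp only [pow_succ]
  noncomm_ring
end

section
/- Let A be a (not necessarily commutative) unital ring and let Q⁺, b⁺, f⁺, R⁺ ∈ A satisfy Q⁺b⁺ − b⁺Q⁺ = f⁺, b⁺f⁺ + f⁺b⁺ = 2R⁺, and b⁺R⁺ = R⁺b⁺. Then for every natural number m ≥ 2, Q⁺(b⁺)^m = (b⁺)^m Q⁺ + ((1 − (−1)^m)/2) f⁺ (b⁺)^{m−1} + 2(⌊(m−2)/2⌋ + 1)(b⁺)^{m−2} R⁺, where ⌊·⌋ denotes the integer part and (1 − (−1)^m)/2 equals 1 if m is odd and 0 if m is even. -/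
section Aux
variable {A : Type*} [Ring A] (Qp bp fp Rp : A)
    (h1 : Qp * bp - bp * Qp = fp) (h2 : bp * fp + fp * bp = 2 * Rp)
    (h3 : bp * Rp = Rp * bp)

theorem aux_key2 (h1 : Qp * bp - bp * Qp = fp) (h2 : bp * fp + fp * bp = 2 * Rp) :
    Qp * bp ^ 2 = bp ^ 2 * Qp + 2 * Rp := by
  have hQ : Qp * bp = bp * Qp + fp := by rw [← h1]; noncomm_ring
  rw [← h2]
  calc Qp * bp ^ 2 = (Qp * bp) * bp := by noncomm_ring
    _ = (bp * Qp + fp) * bp := by rw [hQ]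
    _ = bp * (Qp * bp) + fp * bp := by noncomm_ring
    _ = bp * (bp * Qp + fp) + fp * bp := by rw [hQ]
    _ = bp ^ 2 * Qp + (bp * fp + fp * bp) := by noncomm_ring

theorem aux_fb2 (h2 : bp * fp + fp * bp = 2 * Rp) (h3 : bp * Rp = Rp * bp) :
    fp * bp ^ 2 = bp ^ 2 * fp := by
  have hfb : fp * bp = 2 * Rp - bp * fp := by rw [← h2]; noncomm_ring
  calc fp * bp ^ 2 = (fp * bp) * bp := by noncomm_ring
    _ = (2 * Rp - bp * fp) * bp := by rw [hfb]
    _ = 2 * (Rp * bp) - bp * (fp * bp) := by noncomm_ring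
    _ = 2 * (bp * Rp) - bp * (2 * Rp - bp * fp) := by rw [h3, hfb]
    _ = bp ^ 2 * fp := by noncomm_ring

theorem aux_Rb2 (h3 : bp * Rp = Rp * bp) : Rp * bp ^ 2 = bp ^ 2 * Rp := by
  calc Rp * bp ^ 2 = (Rp * bp) * bp := by noncomm_ring
    _ = (bp * Rp) * bp := by rw [h3]
    _ = bp * (Rp * bp) := by noncomm_ring
    _ = bp * (bp * Rp) := by rw [h3]
    _ = bp ^ 2 * Rp := by noncomm_ring

theorem aux_fcomm (h2 : bp * fp + fp * bp = 2 * Rp) (h3 : bp * Rp = Rp * bp) (k : ℕ) :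
    fp * bp ^ (2 * k) = bp ^ (2 * k) * fp := by
  induction k with
  | zero => simp
  | succ n ih =>
    have h : 2 * (n + 1) = 2 * n + 2 := by ring
    rw [h, pow_add, ← mul_assoc, ih, mul_assoc, aux_fb2 bp fp Rp h2 h3, ← mul_assoc]

theorem aux_heven (h1 : Qp * bp - bp * Qp = fp) (h2 : bp * fp + fp * bp = 2 * Rp)
    (h3 : bp * Rp = Rp * bp) (k : ℕ) :
    Qp * bp ^ (2 * k + 2) = bp ^ (2 * k + 2) * Qp + ((2 * k + 2 : ℕ) : A) * bp ^ (2 * k) * Rp := by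
  induction k with
  | zero =>
    simpa using aux_key2 Qp bp fp Rp h1 h2
  | succ n ih =>
    have he : 2 * (n + 1) = 2 * n + 2 := by ring
    rw [he]
    have hc : ((2 * n + 2 + 2 : ℕ) : A) = ((2 * n + 2 : ℕ) : A) + 2 := by
      push_cast; norm_num
    rw [hc]
    calc Qp * bp ^ ((2 * n + 2) + 2) = (Qp * bp ^ (2 * n + 2)) * bp ^ 2 := by
          rw [pow_add, ← mul_assoc]
      _ = (bp ^ (2 * n + 2) * Qp + ((2 * n + 2 : ℕ) : A) * bp ^ (2 * n) * Rp) * bp ^ 2 := by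
          rw [ih]
      _ = bp ^ (2 * n + 2) * (Qp * bp ^ 2)
            + ((2 * n + 2 : ℕ) : A) * bp ^ (2 * n) * (Rp * bp ^ 2) := by noncomm_ring
      _ = bp ^ (2 * n + 2) * (bp ^ 2 * Qp + 2 * Rp)
            + ((2 * n + 2 : ℕ) : A) * bp ^ (2 * n) * (bp ^ 2 * Rp) := by
          rw [aux_key2 Qp bp fp Rp h1 h2, aux_Rb2 bp Rp h3]
      _ = (bp ^ (2 * n + 2) * bp ^ 2) * Qp
            + (((2 * n + 2 : ℕ) : A) + 2) * ((bp ^ (2 * n) * bp ^ 2) * Rp) := by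
          noncomm_ring
      _ = bp ^ ((2 * n + 2) + 2) * Qp
            + (((2 * n + 2 : ℕ) : A) + 2) * bp ^ (2 * n + 2) * Rp := by
          rw [← pow_add, ← pow_add]; noncomm_ring

theorem aux_hodd (h1 : Qp * bp - bp * Qp = fp) (h2 : bp * fp + fp * bp = 2 * Rp)
    (h3 : bp * Rp = Rp * bp) (k : ℕ) :
    Qp * bp ^ (2 * k + 3) = bp ^ (2 * k + 3) * Qp + fp * bp ^ (2 * k + 2)
      + ((2 * k + 2 : ℕ) : A) * bp ^ (2 * k + 1) * Rp := by
  have hQ : Qp * bp = bp * Qp + fp := by rw [← h1]; noncomm_ring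
  calc Qp * bp ^ (2 * k + 3) = (Qp * bp ^ (2 * k + 2)) * bp := by
        rw [pow_succ, ← mul_assoc]
    _ = (bp ^ (2 * k + 2) * Qp + ((2 * k + 2 : ℕ) : A) * bp ^ (2 * k) * Rp) * bp := by
        rw [aux_heven Qp bp fp Rp h1 h2 h3]
    _ = bp ^ (2 * k + 2) * (Qp * bp) + ((2 * k + 2 : ℕ) : A) * bp ^ (2 * k) * (Rp * bp) := by
        noncomm_ring
    _ = bp ^ (2 * k + 2) * (bp * Qp + fp) + ((2 * k + 2 : ℕ) : A) * bp ^ (2 * k) * (bp * Rp) := by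
        rw [hQ, h3]
    _ = (bp ^ (2 * k + 2) * bp) * Qp + bp ^ (2 * k + 2) * fp
        + ((2 * k + 2 : ℕ) : A) * (bp ^ (2 * k) * bp) * Rp := by noncomm_ring
    _ = bp ^ (2 * k + 3) * Qp + fp * bp ^ (2 * k + 2)
        + ((2 * k + 2 : ℕ) : A) * bp ^ (2 * k + 1) * Rp := by
        rw [← pow_succ, ← pow_succ,
          show bp ^ (2 * k + 2) * fp = fp * bp ^ (2 * k + 2) from by
            rw [show 2 * k + 2 = 2 * (k + 1) from by ring,
              aux_fcomm bp fp Rp h2 h3 (k + 1)]]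
end Aux



/-- If `Q⁺b⁺ − b⁺Q⁺ = f⁺`, `b⁺f⁺ + f⁺b⁺ = 2R⁺` and `b⁺R⁺ = R⁺b⁺` in a unital ring,
then for every `m ≥ 2`,
`Q⁺(b⁺)^m = (b⁺)^m Q⁺ + ((1 − (−1)^m)/2) f⁺ (b⁺)^{m−1} + 2(⌊(m−2)/2⌋ + 1)(b⁺)^{m−2} R⁺`. -/
theorem Qplus_bplus_pow_closed {A : Type*} [Ring A] (Qp bp fp Rp : A)
    (h1 : Qp * bp - bp * Qp = fp) (h2 : bp * fp + fp * bp = 2 * Rp)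
    (h3 : bp * Rp = Rp * bp)
    (m : ℕ) (hm : 2 ≤ m) :
    Qp * bp ^ m
      = bp ^ m * Qp
        + (((1 - (-1 : ℤ) ^ m) / 2 : ℤ) : A) * fp * bp ^ (m - 1)
        + ((2 * ((m - 2) / 2 + 1) : ℕ) : A) * bp ^ (m - 2) * Rp := by
  obtain ⟨k, hk | hk⟩ : ∃ k, m = 2 * k + 2 ∨ m = 2 * k + 3 := by
    rcases Nat.even_or_odd m with ⟨k, hk⟩ | ⟨k, hk⟩
    · exact ⟨k - 1, Or.inl (by omega)⟩
    · exact ⟨k - 1, Or.inr (by omega)⟩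
  · subst hk
    have hint : (((1 - (-1 : ℤ) ^ (2 * k + 2)) / 2 : ℤ) : A) = 0 := by
      norm_num [pow_add, pow_mul]
    have hnat : ((2 * ((2 * k + 2 - 2) / 2 + 1) : ℕ) : A) = ((2 * k + 2 : ℕ) : A) := by
      congr 1; omega
    rw [hint, show 2 * k + 2 - 2 = 2 * k from by omega] at *
    rw [hnat]
    have := aux_heven Qp bp fp Rp h1 h2 h3 k
    rw [this]; noncomm_ring
  · subst hk
    have hint : (((1 - (-1 : ℤ) ^ (2 * k + 3)) / 2 : ℤ) : A) = 1 := by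
      norm_num [pow_add, pow_mul]
    have hnat : ((2 * ((2 * k + 3 - 2) / 2 + 1) : ℕ) : A) = ((2 * k + 2 : ℕ) : A) := by
      congr 1; omega
    rw [hint, hnat, show 2 * k + 3 - 1 = 2 * k + 2 from by omega,
      show 2 * k + 3 - 2 = 2 * k + 1 from by omega]
    have := aux_hodd Qp bp fp Rp h1 h2 h3 k
    rw [this]; noncomm_ring
end
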